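/- For every integer k ≥ 1, the Riemann zeta function satisfies ζ(k+1) = Σ_{n=k}^{∞} ((-1)^{n-k}/(n · n!)) s(n,k), where s(n,k) are the (signed) classical Stirling numbers of the first kind; equivalently, ζ(k+1) = Σ_{n=k}^{∞} |s(n,k)|/(n · n!), and this series converges. -/

import Mathlib

open Finset Filter Topology

/-- The signed classical Stirling numbers of the first kind, defined by the recurrence
`s(n+1,k) = s(n,k-1) - n·s(n,k)`, with `s(0,0) = 1`, `s(n,0) = 0` for `n ≥ 1`,
and `s(n,k) = 0` for `k > n`. -/
def stirling1 : ℕ → ℕ → ℤ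
  | 0, 0 => 1
  | 0, _ + 1 => 0
  | _ + 1, 0 => 0
  | n + 1, k + 1 => stirling1 n k - (n : ℤ) * stirling1 n (k + 1)

/-- Unsigned Stirling numbers of the first kind. -/
def stc : ℕ → ℕ → ℕ
  | 0, 0 => 1
  | 0, _ + 1 => 0
  | _ + 1, 0 => 0
  | n + 1, k + 1 => stc n k + n * stc n (k + 1)

lemma stirling1_eq_stc : ∀ n k, stirling1 n k = (-1) ^ (n + k) * (stc n k : ℤ)
  | 0, 0 => by simp [stirling1, stc]
  | 0, k + 1 => by simp [stirling1, stc]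
  | n + 1, 0 => by simp [stirling1, stc]
  | n + 1, k + 1 => by
      rw [stirling1, stc, stirling1_eq_stc n k, stirling1_eq_stc n (k + 1)]
      push_cast
      ring

lemma stc_eq_zero_of_lt : ∀ n k, n < k → stc n k = 0
  | 0, 0 => by omega
  | 0, k + 1 => fun _ => rfl
  | n + 1, 0 => by omega
  | n + 1, k + 1 => fun h => by
      rw [stc, stc_eq_zero_of_lt n k (by omega), stc_eq_zero_of_lt n (k+1) (by omega)]
      simp

lemma tendsto_zero_of_le {a : ℕ → ℝ} (h0 : ∀ p, 0 ≤ a p) (h1 : ∀ p, a p ≤ 1 / (p + 1)) :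
    Tendsto a atTop (𝓝 0) :=
  squeeze_zero h0 h1 tendsto_one_div_add_atTop_nhds_zero_nat

lemma hasSum_telescope {a : ℕ → ℝ} (hmono : ∀ p, a (p + 1) ≤ a p)
    (h0 : Tendsto a atTop (𝓝 0)) : HasSum (fun p => a p - a (p + 1)) (a 0) := by
  rw [hasSum_iff_tendsto_nat_of_nonneg (fun i => sub_nonneg.2 (hmono i))]
  simp only [Finset.sum_range_sub' a]
  simpa using tendsto_const_nhds.sub h0

/-- Fubini-swap for nonneg double series. -/
lemma hasSum_swap_of_nonneg {F : ℕ × ℕ → ℝ} {g h : ℕ → ℝ} {S : ℝ}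
    (hF : ∀ p, 0 ≤ F p)
    (hg : ∀ j, HasSum (fun n => F (j, n)) (g j)) (hgS : HasSum g S)
    (hh : ∀ n, HasSum (fun j => F (j, n)) (h n)) : HasSum h S := by
  have hsum : Summable F := by
    refine (summable_prod_of_nonneg hF).2 ⟨fun j => (hg j).summable, ?_⟩
    exact hgS.summable.congr fun j => ((hg j).tsum_eq).symm
  have h1 : HasSum F S := by
    have h2 := hsum.hasSum.prod_fiberwise hg
    rw [← h2.unique hgS]
    exact hsum.hasSum
  have h3 : HasSum (fun p : ℕ × ℕ => F (p.2, p.1)) S :=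
    ((Equiv.prodComm ℕ ℕ).hasSum_iff).2 h1
  exact h3.prod_fiberwise hh

/-- `w n q = q! / (n+q+1)!`. -/
noncomputable def w (n q : ℕ) : ℝ := q.factorial / (n + q + 1).factorial

lemma w_nonneg (n q : ℕ) : 0 ≤ w n q :=
  div_nonneg (by positivity) (by positivity)

lemma hasSum_w (n : ℕ) :
    HasSum (fun q => w (n + 1) q) (1 / ((n + 1) * (n + 1).factorial)) := by
  set A : ℕ → ℝ := fun q => (q.factorial : ℝ) / ((n + 1) * (n + 1 + q).factorial) with hA
  have key : ∀ q, A q - A (q + 1) = w (n + 1) q := by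
    intro q
    have h1 : ((n + 1 + (q + 1)).factorial : ℝ) = ((n + 1 + q : ℕ) + 1) * (n + 1 + q).factorial := by
      rw [show n + 1 + (q + 1) = (n + 1 + q) + 1 by ring, Nat.factorial_succ]; push_cast; ring
    have h2 : ((n + 1 + q + 1).factorial : ℝ) = ((n + 1 + q : ℕ) + 1) * (n + 1 + q).factorial := by
      rw [Nat.factorial_succ]; push_cast; ring
    have hf : ((n + 1 + q).factorial : ℝ) ≠ 0 := by positivity
    have hq : ((q + 1).factorial : ℝ) = (q + 1) * q.factorial := by
      rw [Nat.factorial_succ]; push_cast; ring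
    simp only [hA, w, h1, h2, hq]
    have hn : ((n : ℝ) + 1) ≠ 0 := by positivity
    field_simp
    push_cast
    ring
  have hmono : ∀ q, A (q + 1) ≤ A q := by
    intro q
    have := key q
    have h0 := w_nonneg (n + 1) q
    linarith
  have hnonneg : ∀ q, 0 ≤ A q := fun q => div_nonneg (by positivity) (by positivity)
  have hbound : ∀ q, A q ≤ 1 / (q + 1) := by
    intro q
    rw [div_le_div_iff₀ (by positivity) (by positivity)]
    have h3 : ((q + 1) : ℕ) * q.factorial ≤ (n + 1) * (n + 1 + q).factorial := by
      calc ((q + 1) : ℕ) * q.factorial = (q + 1).factorial := (Nat.factorial_succ q).symm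
        _ ≤ (n + 1 + q).factorial := Nat.factorial_le (by omega)
        _ ≤ (n + 1) * (n + 1 + q).factorial := Nat.le_mul_of_pos_left _ (by omega)
    calc (q.factorial : ℝ) * (q + 1) = ((q + 1) * q.factorial : ℕ) := by push_cast; ring
      _ ≤ ((n + 1) * (n + 1 + q).factorial : ℕ) := by exact_mod_cast h3
      _ = 1 * ((n + 1) * (n + 1 + q).factorial : ℝ) := by push_cast; ring
  have h := hasSum_telescope hmono (tendsto_zero_of_le hnonneg hbound)
  have h2 : (fun q => A q - A (q + 1)) = fun q => w (n + 1) q := funext key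
  rw [h2] at h
  have hA0 : A 0 = 1 / ((n + 1) * (n + 1).factorial) := by
    simp [hA]
  rwa [hA0] at h

lemma hasSum_T (j q : ℕ) :
    HasSum (fun p => ((p + j).factorial : ℝ) * w (p + j + 1) q)
      ((j.factorial : ℝ) * w j q / (q + 1)) := by
  set A : ℕ → ℝ :=
    fun p => ((p + j).factorial : ℝ) * q.factorial / ((q + 1) * (p + j + q + 1).factorial) with hA
  have key : ∀ p, A p - A (p + 1) = ((p + j).factorial : ℝ) * w (p + j + 1) q := by
    intro p
    have h1 : ((p + 1 + j).factorial : ℝ) = ((p + j : ℕ) + 1) * (p + j).factorial := by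
      rw [show p + 1 + j = (p + j) + 1 by ring, Nat.factorial_succ]; push_cast; ring
    have h2 : ((p + 1 + j + q + 1).factorial : ℝ)
        = ((p + j + q + 1 : ℕ) + 1) * (p + j + q + 1).factorial := by
      rw [show p + 1 + j + q + 1 = (p + j + q + 1) + 1 by ring, Nat.factorial_succ]
      push_cast; ring
    have h3 : ((p + j + 1 + q + 1).factorial : ℝ)
        = ((p + j + q + 1 : ℕ) + 1) * (p + j + q + 1).factorial := by
      rw [show p + j + 1 + q + 1 = (p + j + q + 1) + 1 by ring, Nat.factorial_succ]
      push_cast; ring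
    have hf : ((p + j + q + 1).factorial : ℝ) ≠ 0 := by positivity
    simp only [hA, w, h1, h2, h3]
    field_simp
    push_cast
    ring
  have hmono : ∀ p, A (p + 1) ≤ A p := by
    intro p
    have := key p
    have h0 : 0 ≤ ((p + j).factorial : ℝ) * w (p + j + 1) q :=
      mul_nonneg (by positivity) (w_nonneg _ _)
    linarith
  have hnonneg : ∀ p, 0 ≤ A p := fun p => div_nonneg (by positivity) (by positivity)
  have hbound : ∀ p, A p ≤ 1 / (p + 1) := by
    intro p
    rw [div_le_div_iff₀ (by positivity) (by positivity)]
    have h3 : (p + 1) * ((p + j).factorial * q.factorial)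
        ≤ (q + 1) * (p + j + q + 1).factorial := by
      calc (p + 1) * ((p + j).factorial * q.factorial)
          ≤ (p + j + 1) * ((p + j).factorial * q.factorial) := by
            apply Nat.mul_le_mul_right; omega
        _ = (p + j + 1).factorial * q.factorial := by rw [Nat.factorial_succ]; ring
        _ ≤ (p + j + 1 + q).factorial := by
            have := Nat.factorial_mul_factorial_dvd_factorial_add (p + j + 1) q
            exact Nat.le_of_dvd (Nat.factorial_pos _) this
        _ ≤ (p + j + q + 1).factorial := Nat.factorial_le (by omega)
        _ ≤ (q + 1) * (p + j + q + 1).factorial := Nat.le_mul_of_pos_left _ (by omega)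
    calc ((p + j).factorial : ℝ) * q.factorial * (p + 1)
        = ((p + 1) * ((p + j).factorial * q.factorial) : ℕ) := by push_cast; ring
      _ ≤ ((q + 1) * (p + j + q + 1).factorial : ℕ) := by exact_mod_cast h3
      _ = 1 * (((q : ℝ) + 1) * (p + j + q + 1).factorial) := by push_cast; ring
  have h := hasSum_telescope hmono (tendsto_zero_of_le hnonneg hbound)
  have h2 : (fun p => A p - A (p + 1))
      = fun p => ((p + j).factorial : ℝ) * w (p + j + 1) q := funext key
  rw [h2] at h
  have hA0 : A 0 = (j.factorial : ℝ) * w j q / (q + 1) := by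
    simp only [hA]
    rw [w, show 0 + j = j from Nat.zero_add j]
    field_simp
  rwa [hA0] at h

lemma stc_unroll (k : ℕ) : ∀ n, (stc (n + 1) (k + 1) : ℝ)
    = ∑ j ∈ range (n + 1), (n.factorial : ℝ) / j.factorial * stc j k
  | 0 => by simp [stc]
  | n + 1 => by
      have hfac : (((n + 1)).factorial : ℝ) = ((n : ℝ) + 1) * n.factorial := by
        rw [Nat.factorial_succ]; push_cast; ring
      have hIH := stc_unroll k n
      rw [stc]
      push_cast
      rw [hIH]
      conv_rhs => rw [Finset.sum_range_succ]
      rw [div_self (by positivity : (((n + 1)).factorial : ℝ) ≠ 0), one_mul, add_comm]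
      congr 1
      rw [Finset.mul_sum]
      exact Finset.sum_congr rfl fun j _ => by rw [hfac]; ring

lemma hasSum_A (k : ℕ) : ∀ q : ℕ, HasSum (fun n => (stc n k : ℝ) * w n q)
    (1 / ((q : ℝ) + 1) ^ (k + 1)) := by
  induction k with
  | zero =>
    intro q
    have h0 : w 0 q = 1 / ((q : ℝ) + 1) := by
      rw [w, show 0 + q + 1 = q + 1 by omega, Nat.factorial_succ]
      have : (q.factorial : ℝ) ≠ 0 := by positivity
      push_cast
      field_simp
    have hfn : (fun n => (stc n 0 : ℝ) * w n q)
        = fun n => if n = 0 then 1 / ((q : ℝ) + 1) else 0 := by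
      funext n
      cases n with
      | zero => simp [stc, h0]
      | succ m => simp [stc]
    rw [hfn, pow_one]
    exact hasSum_ite_eq 0 _
  | succ k IH =>
    intro q
    set F : ℕ × ℕ → ℝ := fun jn =>
      if jn.1 < jn.2 then
        (stc jn.1 k : ℝ) * (((jn.2 - 1).factorial : ℝ) / jn.1.factorial) * w jn.2 q
      else 0 with hFdef
    have hF : ∀ p, 0 ≤ F p := by
      intro p
      simp only [hFdef]
      split
      · have := w_nonneg p.2 q
        positivity
      · exact le_refl 0
    have hg : ∀ j : ℕ, HasSum (fun n => F (j, n)) ((stc j k : ℝ) * w j q / ((q : ℝ) + 1)) := by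
      intro j
      have hT := (hasSum_T j q).mul_left ((stc j k : ℝ) / j.factorial)
      have hshift : (fun p => F (j, p + (j + 1)))
          = fun p => (stc j k : ℝ) / j.factorial * (((p + j).factorial : ℝ) * w (p + j + 1) q) := by
        funext p
        have h3 : p + (j + 1) = p + j + 1 := by omega
        rw [h3]
        simp only [hFdef]
        rw [if_pos (by omega : j < p + j + 1)]
        simp only [Nat.succ_sub_one]
        ring
      have hval : (stc j k : ℝ) / j.factorial * ((j.factorial : ℝ) * w j q / ((q : ℝ) + 1))
          = (stc j k : ℝ) * w j q / ((q : ℝ) + 1) := by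
        have : (j.factorial : ℝ) ≠ 0 := by positivity
        field_simp
      have hT2 : HasSum (fun p => F (j, p + (j + 1)))
          ((stc j k : ℝ) * w j q / ((q : ℝ) + 1)) := by
        rw [hshift, ← hval]; exact hT
      have hzero : ∑ i ∈ range (j + 1), F (j, i) = 0 := by
        apply Finset.sum_eq_zero
        intro i hi
        simp only [Finset.mem_range] at hi
        simp only [hFdef, if_neg (by omega : ¬ j < i)]
      have := (hasSum_nat_add_iff (f := fun n => F (j, n)) (j + 1)).1 hT2
      rwa [hzero, add_zero] at this
    have hgS : HasSum (fun j => (stc j k : ℝ) * w j q / ((q : ℝ) + 1))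
        (1 / ((q : ℝ) + 1) ^ (k + 1 + 1)) := by
      have := (IH q).div_const ((q : ℝ) + 1)
      have hval : 1 / ((q : ℝ) + 1) ^ (k + 1) / ((q : ℝ) + 1)
          = 1 / ((q : ℝ) + 1) ^ (k + 1 + 1) := by
        rw [pow_succ]
        field_simp
        ring
      rwa [hval] at this
    have hh : ∀ n : ℕ, HasSum (fun j => F (j, n)) ((stc n (k + 1) : ℝ) * w n q) := by
      intro n
      have hfin : ∀ j ∉ range n, F (j, n) = 0 := by
        intro j hj
        simp only [Finset.mem_range, not_lt] at hj
        simp only [hFdef, if_neg (by omega : ¬ j < n)]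
      have h1 := hasSum_sum_of_ne_finset_zero (L := SummationFilter.unconditional ℕ) hfin
      have h2 : ∑ j ∈ range n, F (j, n) = (stc n (k + 1) : ℝ) * w n q := by
        cases n with
        | zero => simp [stc]
        | succ m =>
          have : ∀ j ∈ range (m + 1), F (j, m + 1)
              = ((m.factorial : ℝ) / j.factorial * (stc j k : ℝ)) * w (m + 1) q := by
            intro j hj
            simp only [Finset.mem_range] at hj
            simp only [hFdef, if_pos (by omega : j < m + 1),
              show m + 1 - 1 = m from rfl]
            ring
          rw [Finset.sum_congr rfl this, ← Finset.sum_mul, ← stc_unroll k m]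
      rwa [h2] at h1
    exact hasSum_swap_of_nonneg hF hg hgS hh

lemma stirling1_natAbs (n k : ℕ) : (stirling1 n k).natAbs = stc n k := by
  rw [stirling1_eq_stc]
  simp [Int.natAbs_mul, Int.natAbs_pow]


/-- Rassias–Srivastava: `ζ(k+1) = ∑_{n=k}^∞ ((-1)^{n-k}/(n·n!)) s(n,k)`,
equivalently `ζ(k+1) = ∑_{n=k}^∞ |s(n,k)|/(n·n!)`, and the series converges.
The sum over `n ≥ k` is reindexed by `n = m + k`. -/
theorem zeta_eq_tsum_stirling1 (k : ℕ) (hk : 1 ≤ k) :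
    Summable (fun m : ℕ =>
      ((-1 : ℝ) ^ m * (stirling1 (m + k) k : ℝ)) / ((m + k) * (m + k).factorial)) ∧
    riemannZeta (k + 1) =
      ∑' m : ℕ, ((-1 : ℂ) ^ m * (stirling1 (m + k) k : ℂ)) / ((m + k) * (m + k).factorial) ∧
    riemannZeta (k + 1) =
      ∑' m : ℕ, (((stirling1 (m + k) k).natAbs : ℂ)) / ((m + k) * (m + k).factorial) := by
  -- the real sum `Z = ∑ 1/(q+1)^(k+1)`
  obtain ⟨Z, hZ⟩ : ∃ Z : ℝ, HasSum (fun q : ℕ => 1 / ((q : ℝ) + 1) ^ (k + 1)) Z := by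
    have h1 : Summable (fun q : ℕ => 1 / (q : ℝ) ^ (k + 1)) :=
      Real.summable_one_div_nat_pow.mpr (by omega)
    have h2 := (summable_nat_add_iff 1).mpr h1
    have h3 : Summable (fun q : ℕ => 1 / ((q : ℝ) + 1) ^ (k + 1)) :=
      h2.congr fun q => by push_cast; ring
    exact ⟨_, h3.hasSum⟩
  -- main real computation
  have hmain : HasSum (fun n : ℕ => (stc n k : ℝ) / ((n : ℝ) * n.factorial)) Z := by
    apply hasSum_swap_of_nonneg
      (F := fun qn : ℕ × ℕ => (stc qn.2 k : ℝ) * w qn.2 qn.1)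
      (fun p => mul_nonneg (by positivity) (w_nonneg _ _)) (hasSum_A k) hZ
    intro n
    cases n with
    | zero =>
      have hc : stc 0 k = 0 := stc_eq_zero_of_lt 0 k (by omega)
      simp only [hc, Nat.cast_zero, zero_mul, mul_comm, zero_div]
      simpa using hasSum_zero
    | succ m =>
      have h := (hasSum_w m).mul_left ((stc (m + 1) k : ℝ))
      convert h using 1
      case e'_3 => rfl
      push_cast
      rw [mul_one_div]
  -- shift the index by `k`
  have hzero : ∑ i ∈ range k, (stc i k : ℝ) / ((i : ℝ) * i.factorial) = 0 :=
    Finset.sum_eq_zero fun i hi => by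
      rw [stc_eq_zero_of_lt i k (Finset.mem_range.1 hi)]; simp
  have hshift : HasSum
      (fun m : ℕ => (stc (m + k) k : ℝ) / (((m + k : ℕ) : ℝ) * (m + k).factorial)) Z := by
    refine (hasSum_nat_add_iff
      (f := fun n : ℕ => (stc n k : ℝ) / ((n : ℝ) * n.factorial)) k).2 ?_
    rwa [hzero, add_zero]
  -- the real signed series is the same as the unsigned one
  have hsign : ∀ m : ℕ, ((-1 : ℝ) ^ m * (stirling1 (m + k) k : ℝ)) = (stc (m + k) k : ℝ) := by
    intro m
    rw [stirling1_eq_stc]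
    push_cast
    rw [← mul_assoc, ← pow_add, show m + (m + k + k) = 2 * (m + k) by ring, pow_mul]
    norm_num
  have hre : HasSum (fun m : ℕ =>
      ((-1 : ℝ) ^ m * (stirling1 (m + k) k : ℝ)) / ((m + k) * (m + k).factorial)) Z := by
    refine hshift.congr_fun ?_
    intro m
    rw [hsign m]
    congr 1
    push_cast
    ring
  -- complex versions
  have hC : HasSum (fun m : ℕ =>
      (((stc (m + k) k : ℝ) / (((m + k : ℕ) : ℝ) * (m + k).factorial) : ℝ) : ℂ))
      ((Z : ℝ) : ℂ) := Complex.hasSum_ofReal.mpr hshift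
  have hzeta : riemannZeta (k + 1) = ((Z : ℝ) : ℂ) := by
    have hre1 : 1 < Complex.re ((k : ℂ) + 1) := by
      simp only [Complex.add_re, Complex.natCast_re, Complex.one_re]
      have : (1 : ℝ) ≤ (k : ℝ) := by exact_mod_cast hk
      linarith
    rw [zeta_eq_tsum_one_div_nat_add_one_cpow hre1]
    have hZC : HasSum (fun q : ℕ => 1 / ((q : ℂ) + 1) ^ ((k : ℂ) + 1)) ((Z : ℝ) : ℂ) := by
      have := Complex.hasSum_ofReal.mpr hZ
      refine this.congr_fun fun q => ?_
      rw [show ((k : ℂ) + 1) = ((k + 1 : ℕ) : ℂ) by push_cast; ring, Complex.cpow_natCast]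
      push_cast
      ring
    exact hZC.tsum_eq
  refine ⟨hre.summable, ?_, ?_⟩
  · rw [hzeta]
    refine (HasSum.tsum_eq ?_).symm
    refine hC.congr_fun fun m => ?_
    have hsgnC : ((-1 : ℂ) ^ m * (stirling1 (m + k) k : ℂ)) = (stc (m + k) k : ℂ) := by
      rw [stirling1_eq_stc]
      push_cast
      rw [← mul_assoc, ← pow_add, show m + (m + k + k) = 2 * (m + k) by ring, pow_mul]
      norm_num
    rw [hsgnC]
    push_cast
    ring
  · rw [hzeta]
    refine (HasSum.tsum_eq ?_).symm
    refine hC.congr_fun fun m => ?_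
    rw [stirling1_natAbs]
    push_cast
    ring
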